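/- Let G be the wheel graph with n ≥ 3 leaves: the vertices are a hub H and leaves indexed by Z/nZ, each leaf is joined to the hub and to its two cyclically adjacent leaves by weight-1 edges, and all other weights are zero. Let γ = (3 − √5)/2 and set B = 18n(1 − γ) / (3(1 + γ)(1 − γⁿ) + n(1 + γⁿ)(1 − γ)). Then the coalescence times of G satisfy: (i) for any leaf ℓ, τ_{ℓH} = B(1 + γⁿ) − 3; and (ii) for any two leaves at cyclic distance j with 0 ≤ j ≤ n, τ_{L,j} = B(1 − γʲ)(1 − γ^{n−j}). -/

import Mathlib

open Finset Filter Asymptotics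

noncomputable section

namespace EvoGraph

variable {V : Type*} [Fintype V] [DecidableEq V]

/-- Weighted degree `w_i = ∑_j w_{ij}`. -/
def deg (w : V → V → ℝ) (i : V) : ℝ := ∑ j, w i j

/-- Total edge weight `W = ∑_i w_i`. -/
def Wtot (w : V → V → ℝ) : ℝ := ∑ i, deg w i

/-- Random-walk step probability `p_{ij} = w_{ij}/w_i`. -/
def step (w : V → V → ℝ) (i j : V) : ℝ := w i j / deg w i

/-- The stochastic matrix `(p_{ij})`. -/
def stepMat (w : V → V → ℝ) : Matrix V V ℝ := Matrix.of fun i j => step w i j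

/-- `n`-step probability `p^{(n)}_{ij}`: the `(i,j)` entry of the `n`-th power of `(p_{ij})`. -/
def stepN (w : V → V → ℝ) (n : ℕ) (i j : V) : ℝ := (stepMat w ^ n) i j

/-- Stationary distribution `π_i = w_i / W`. -/
def statDist (w : V → V → ℝ) (i : V) : ℝ := deg w i / Wtot w

/-- `w` is a finite connected weighted graph: symmetric nonnegative weights
(self-loops allowed), positive weighted degrees, and any two vertices joined by
a path of edges of positive weight. -/
def IsWeightedGraph (w : V → V → ℝ) : Prop :=
  (∀ i j, w i j = w j i) ∧ (∀ i j, 0 ≤ w i j) ∧ (∀ i, 0 < deg w i) ∧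
  ∀ i j : V, Relation.ReflTransGen (fun a b => 0 < w a b) i j

/-- `τ` is the (symmetric) solution of the coalescence-time system:
`τ_{ii} = 0`, and `τ_{ij} = 1 + (1/2) ∑_k (p_{ik} τ_{kj} + p_{jk} τ_{ik})` for `i ≠ j`. -/
def IsCoalescent (w : V → V → ℝ) (τ : V → V → ℝ) : Prop :=
  (∀ i j, τ i j = τ j i) ∧ (∀ i, τ i i = 0) ∧
  ∀ i j, i ≠ j →
    τ i j = 1 + (1 / 2) * ∑ k, (step w i k * τ k j + step w j k * τ i k)

/-- `τ^{(n)} = ∑_{i,j} π_i p^{(n)}_{ij} τ_{ij}`. -/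
def tauWalk (w τ : V → V → ℝ) (n : ℕ) : ℝ :=
  ∑ i, ∑ j, statDist w i * stepN w n i j * τ i j

/-- Remeeting time `τ⁺_i = 1 + ∑_j p_{ij} τ_{ij}`. -/
def remeet (w τ : V → V → ℝ) (i : V) : ℝ := 1 + ∑ j, step w i j * τ i j

/-- The wheel graph with `n` leaves: hub `none`; leaves `some a` with
`a : Fin n` arranged in a cycle. Each leaf is joined to the hub and to its two
cyclically adjacent leaves by weight-1 edges; all other weights are zero. -/
def wheelW (n : ℕ) [NeZero n] : Option (Fin n) → Option (Fin n) → ℝ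
  | none, some _ => 1
  | some _, none => 1
  | some a, some b => if b = a + 1 ∨ a = b + 1 then 1 else 0
  | none, none => 0

/-- `γ = (3 − √5)/2`. -/
def gam : ℝ := (3 - Real.sqrt 5) / 2

/-- `B = 18n(1 − γ) / (3(1 + γ)(1 − γⁿ) + n(1 + γⁿ)(1 − γ))`. -/
def wheelB (n : ℕ) : ℝ :=
  18 * n * (1 - gam) /
    (3 * (1 + gam) * (1 - gam ^ n) + n * (1 + gam ^ n) * (1 - gam))


/-! ### Auxiliary lemmas -/

section Aux

lemma step_nonneg {w : V → V → ℝ} (hw : IsWeightedGraph w) (i j : V) : 0 ≤ step w i j :=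
  div_nonneg (hw.2.1 i j) (hw.2.2.1 i).le

lemma step_rowsum {w : V → V → ℝ} (hw : IsWeightedGraph w) (i : V) : ∑ k, step w i k = 1 := by
  unfold step
  rw [← Finset.sum_div]
  exact div_self (hw.2.2.1 i).ne'

lemma coalescent_le {w : V → V → ℝ} (hw : IsWeightedGraph w)
    {τ τ' : V → V → ℝ} (h : IsCoalescent w τ) (h' : IsCoalescent w τ')
    (i j : V) : τ i j - τ' i j ≤ 0 := by
  set δ : V → V → ℝ := fun i j => τ i j - τ' i j with hδ
  have hδdiag : ∀ i, δ i i = 0 := fun i => by simp [hδ, h.2.1 i, h'.2.1 i]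
  have hδeq : ∀ i j, i ≠ j →
      δ i j = (1/2) * ∑ k, (step w i k * δ k j + step w j k * δ i k) := by
    intro i j hij
    have e1 := h.2.2 i j hij
    have e2 := h'.2.2 i j hij
    have e3 : ∑ k, (step w i k * τ k j + step w j k * τ i k)
        - ∑ k, (step w i k * τ' k j + step w j k * τ' i k)
        = ∑ k, (step w i k * δ k j + step w j k * δ i k) := by
      rw [← Finset.sum_sub_distrib]
      apply Finset.sum_congr rfl
      intro k _
      simp only [hδ]; ring
    have : δ i j = τ i j - τ' i j := rfl
    rw [this, e1, e2]
    linarith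
  obtain ⟨⟨a, b⟩, -, hmax⟩ := Finset.exists_max_image (univ : Finset (V × V))
    (fun p => δ p.1 p.2) ⟨(i, j), mem_univ _⟩
  obtain ⟨M, hM⟩ : ∃ M : ℝ, M = δ a b := ⟨δ a b, rfl⟩
  have hle : ∀ x y, δ x y ≤ M := fun x y => hM ▸ hmax (x, y) (mem_univ _)
  have key : ∀ x y k, x ≠ y → δ x y = M → 0 < w x k → δ k y = M := by
    intro x y k hxy hxyM hwk
    have heq := hδeq x y hxy
    have hsum : ∑ k, (step w x k * (M - δ k y) + step w y k * (M - δ x k)) = 0 := by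
      have h1 : ∑ k, (step w x k * (M - δ k y) + step w y k * (M - δ x k))
          = M * (∑ k, step w x k) + M * (∑ k, step w y k)
            - ∑ k, (step w x k * δ k y + step w y k * δ x k) := by
        rw [Finset.mul_sum, Finset.mul_sum, ← Finset.sum_add_distrib, ← Finset.sum_sub_distrib]
        apply Finset.sum_congr rfl; intro k _; ring
      have h2 : ∑ k, (step w x k * δ k y + step w y k * δ x k) = 2 * δ x y := by
        rw [heq]; ring
      rw [h1, step_rowsum hw, step_rowsum hw, h2, hxyM]; ring
    have hnn : ∀ k ∈ (univ : Finset V),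
        0 ≤ step w x k * (M - δ k y) + step w y k * (M - δ x k) := by
      intro k _
      have := step_nonneg hw x k
      have := step_nonneg hw y k
      have := hle k y
      have := hle x k
      nlinarith
    have hzero := (Finset.sum_eq_zero_iff_of_nonneg hnn).1 hsum k (mem_univ k)
    have hp : 0 < step w x k := div_pos hwk (hw.2.2.1 x)
    have t1 : 0 ≤ step w x k * (M - δ k y) :=
      mul_nonneg hp.le (by linarith [hle k y])
    have t2 : 0 ≤ step w y k * (M - δ x k) :=
      mul_nonneg (step_nonneg hw y k) (by linarith [hle x k])
    have h1 : step w x k * (M - δ k y) = 0 := by linarith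
    rcases mul_eq_zero.1 h1 with h2 | h2
    · exact absurd h2 hp.ne'
    · linarith [hle k y]
  have claim : ∀ x, Relation.ReflTransGen (fun a b => 0 < w a b) x b →
      δ x b = M → M ≤ 0 := by
    intro x hx
    induction hx using Relation.ReflTransGen.head_induction_on with
    | refl => intro hxb; rw [← hxb, hδdiag]
    | @head c d hedge htail ih =>
        intro hcb
        by_cases hcbeq : c = b
        · subst hcbeq; rw [hδdiag] at hcb; linarith
        · exact ih (key c b d hcbeq hcb hedge)
  have hM0 : M ≤ 0 := claim a (hw.2.2.2 a b) hM.symm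
  calc δ i j ≤ M := hle i j
    _ ≤ 0 := hM0

lemma coalescent_unique {w : V → V → ℝ} (hw : IsWeightedGraph w)
    {τ τ' : V → V → ℝ} (h : IsCoalescent w τ) (h' : IsCoalescent w τ') : τ = τ' := by
  funext i j
  have h1 := coalescent_le hw h h' i j
  have h2 := coalescent_le hw h' h i j
  linarith

end Aux

section WheelAux

variable {n : ℕ} [NeZero n]

lemma one_val (hn : 3 ≤ n) : ((1 : Fin n) : ℕ) = 1 := by
  rw [Fin.val_one']; exact Nat.mod_eq_of_lt (by omega)

lemma succ_ne_pred (hn : 3 ≤ n) (a : Fin n) : a + 1 ≠ a - 1 := by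
  intro h
  have h2 : (1 : Fin n) + 1 = 0 := by
    have := congrArg (fun x => x - a + 1) h
    simpa [sub_add_cancel, add_sub_cancel_left] using this
  have h3 := congrArg Fin.val h2
  rw [Fin.val_add, one_val hn, Fin.val_zero, Nat.mod_eq_of_lt (by omega)] at h3
  omega

lemma wheel_leaf_leaf (hn : 3 ≤ n) (a b : Fin n) :
    wheelW n (some a) (some b) = if b = a + 1 ∨ b = a - 1 then 1 else 0 := by
  show (if b = a + 1 ∨ a = b + 1 then (1:ℝ) else 0) = _
  have : (a = b + 1) ↔ (b = a - 1) := by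
    constructor
    · intro h; rw [h]; abel
    · intro h; rw [h]; abel
  exact if_congr (or_congr Iff.rfl this) rfl rfl

lemma leaf_sum (hn : 3 ≤ n) (a : Fin n) (f : Fin n → ℝ) :
    ∑ b, wheelW n (some a) (some b) * f b = f (a + 1) + f (a - 1) := by
  have h1 : ∀ b : Fin n, wheelW n (some a) (some b) * f b
      = (if b = a + 1 then f b else 0) + (if b = a - 1 then f b else 0) := by
    intro b
    rw [wheel_leaf_leaf hn]
    by_cases h1 : b = a + 1 <;> by_cases h2 : b = a - 1 <;>
      simp [h1, h2, succ_ne_pred hn a, (succ_ne_pred hn a).symm]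
  simp only [h1]
  rw [Finset.sum_add_distrib, Finset.sum_ite_eq' univ (a+1) f,
    Finset.sum_ite_eq' univ (a-1) f]
  simp

lemma deg_hub : deg (wheelW n) none = n := by
  unfold deg
  rw [Fintype.sum_option]
  show (0:ℝ) + ∑ _b : Fin n, (1:ℝ) = n
  simp

lemma deg_leaf (hn : 3 ≤ n) (a : Fin n) : deg (wheelW n) (some a) = 3 := by
  unfold deg
  rw [Fintype.sum_option]
  show (1:ℝ) + ∑ b : Fin n, wheelW n (some a) (some b) = 3
  have := leaf_sum hn a (fun _ => (1:ℝ))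
  simp only [mul_one] at this
  rw [this]; norm_num

lemma hubStep (hn : 3 ≤ n) (g : Option (Fin n) → ℝ) :
    ∑ k, step (wheelW n) none k * g k = (1/n) * ∑ b, g (some b) := by
  unfold step
  rw [Fintype.sum_option, deg_hub]
  show (0:ℝ)/n * g none + _ = _
  rw [zero_div, zero_mul, zero_add, Finset.mul_sum]
  apply Finset.sum_congr rfl
  intro b _
  show (1:ℝ)/n * g (some b) = _
  ring

lemma leafStep (hn : 3 ≤ n) (a : Fin n) (g : Option (Fin n) → ℝ) :
    ∑ k, step (wheelW n) (some a) k * g k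
      = (1/3) * (g none + g (some (a+1)) + g (some (a-1))) := by
  unfold step
  rw [Fintype.sum_option, deg_leaf hn]
  show (1:ℝ)/3 * g none + ∑ b, wheelW n (some a) (some b) / 3 * g (some b) = _
  have : ∑ b, wheelW n (some a) (some b) / 3 * g (some b)
      = (1/3) * ∑ b, wheelW n (some a) (some b) * g (some b) := by
    rw [Finset.mul_sum]; apply Finset.sum_congr rfl; intro b _; ring
  rw [this, leaf_sum hn a (fun b => g (some b))]
  ring

lemma wheel_isWeighted (hn : 3 ≤ n) : IsWeightedGraph (wheelW n) := by
  refine ⟨?_, ?_, ?_, ?_⟩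
  · rintro (_|a) (_|b) <;> simp [wheelW]
    exact if_congr or_comm rfl rfl
  · rintro (_|a) (_|b) <;> simp [wheelW] <;> split <;> norm_num
  · rintro (_|a)
    · rw [deg_hub]
      have hn0 : 0 < n := by omega
      exact_mod_cast hn0
    · rw [deg_leaf hn]; norm_num
  · have hub : ∀ a : Fin n, 0 < wheelW n (some a) none := by
      intro a; show (0:ℝ) < 1; norm_num
    have huc : ∀ a : Fin n, 0 < wheelW n none (some a) := by
      intro a; show (0:ℝ) < 1; norm_num
    rintro (_|a) (_|b)
    · exact .refl
    · exact .single (huc b)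
    · exact .single (hub a)
    · exact .tail (.single (hub a)) (huc b)

end WheelAux

section GamAux

lemma sqrt5_sq : Real.sqrt 5 ^ 2 = 5 := Real.sq_sqrt (by norm_num)

lemma gam_pos : 0 < gam := by
  have h : Real.sqrt 5 < 3 := by
    nlinarith [Real.sq_sqrt (show (5:ℝ) ≥ 0 by norm_num), Real.sqrt_nonneg 5]
  unfold gam; linarith

lemma gam_lt_one : gam < 1 := by
  have h : 1 < Real.sqrt 5 := by
    nlinarith [Real.sq_sqrt (show (5:ℝ) ≥ 0 by norm_num), Real.sqrt_nonneg 5]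
  unfold gam; linarith

lemma gam_sq : gam ^ 2 = 3 * gam - 1 := by
  unfold gam; nlinarith [sqrt5_sq]

lemma gam_pow_lt_one (n : ℕ) (hn : 1 ≤ n) : gam ^ n < 1 :=
  pow_lt_one₀ gam_pos.le gam_lt_one (by omega)

lemma wheelD_pos (n : ℕ) (hn : 1 ≤ n) :
    0 < 3 * (1 + gam) * (1 - gam ^ n) + n * (1 + gam ^ n) * (1 - gam) := by
  have h1 := gam_pow_lt_one n hn
  have h2 : (0:ℝ) < gam ^ n := pow_pos gam_pos n
  have h3 : (1:ℝ) ≤ n := by exact_mod_cast hn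
  have t1 : (0:ℝ) < 3 * (1 + gam) * (1 - gam ^ n) := by
    apply mul_pos (by nlinarith [gam_pos]) (by linarith)
  have t2 : (0:ℝ) < (n:ℝ) * (1 + gam ^ n) * (1 - gam) := by
    apply mul_pos (mul_pos (by linarith) (by linarith)) (by linarith [gam_lt_one])
  linarith

/-- leaf-leaf coalescence candidate value at distance `j`. -/
def Ff (n j : ℕ) : ℝ := wheelB n * (1 - gam ^ j) * (1 - gam ^ (n - j))

/-- leaf-hub coalescence candidate value. -/
def Tv (n : ℕ) : ℝ := wheelB n * (1 + gam ^ n) - 3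

lemma Ff_zero (n : ℕ) : Ff n 0 = 0 := by simp [Ff]

lemma Ff_self (n : ℕ) : Ff n n = 0 := by simp [Ff]

lemma Ff_symm {n j : ℕ} (h : j ≤ n) : Ff n j = Ff n (n - j) := by
  unfold Ff
  rw [show n - (n - j) = j by omega]
  ring

lemma Frec (n k m : ℕ) (hnm : n = k + m + 2) :
    Ff n (k + 1) = 1 + (1/3) * (Tv n + Ff n k + Ff n (k + 2)) := by
  subst hnm
  unfold Ff Tv
  rw [show k + m + 2 - (k + 1) = m + 1 by omega,
      show k + m + 2 - k = m + 2 by omega,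
      show k + m + 2 - (k + 2) = m by omega]
  linear_combination (wheelB (k + m + 2) / 3) * (gam ^ k + gam ^ m) * gam_sq

lemma Ssum (n : ℕ) (hn : 1 ≤ n) :
    ∑ j ∈ range n, Ff n j
      = wheelB n * ((n:ℝ) * (1 + gam ^ n) - (1 + gam) * ∑ j ∈ range n, gam ^ j) := by
  have h1 : ∀ j ∈ range n, Ff n j
      = wheelB n * (1 + gam * gam ^ (n-1)) - wheelB n * gam ^ j
        - (wheelB n * gam) * gam ^ (n-1-j) := by
    intro j hj
    rw [mem_range] at hj
    unfold Ff
    rw [show n - j = (n-1-j) + 1 by omega]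
    have e4 : gam ^ j * gam ^ (n-1-j) = gam ^ (n-1) := by
      rw [← pow_add]; congr 1; omega
    linear_combination (wheelB n * gam) * e4
  rw [Finset.sum_congr rfl h1, Finset.sum_sub_distrib, Finset.sum_sub_distrib,
    Finset.sum_const, ← Finset.mul_sum, ← Finset.mul_sum,
    Finset.sum_range_reflect (fun j => gam ^ j) n]
  have e5 : gam * gam ^ (n-1) = gam ^ n := by
    rw [← pow_succ']; congr 1; omega
  rw [nsmul_eq_mul, e5]
  simp only [card_range]
  ring

lemma TA (n : ℕ) (hn : 3 ≤ n) :
    Tv n = 1 + (1/2) * ((1/(n:ℝ)) * (∑ j ∈ range n, Ff n j) + (2/3) * Tv n) := by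
  have hG : ∑ j ∈ range n, gam ^ j = (gam ^ n - 1)/(gam - 1) :=
    geom_sum_eq (ne_of_lt gam_lt_one) n
  rw [Ssum n (by omega), hG]
  unfold Tv wheelB
  have hD := (wheelD_pos n (by omega)).ne'
  have hD' : 3 * (1 + gam) * (1 - gam ^ n) + (n:ℝ) * (1 - gam) * (1 + gam ^ n) ≠ 0 := by
    rw [show (n:ℝ) * (1 - gam) * (1 + gam ^ n) = (n:ℝ) * (1 + gam ^ n) * (1 - gam) by ring]; exact hD
  have hgam1 : gam - 1 ≠ 0 := by have := gam_lt_one; intro h; linarith [sub_eq_zero.mp h]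
  have hn0 : (n:ℝ) ≠ 0 := by
    have : 0 < n := by omega
    exact_mod_cast this.ne'
  field_simp
  ring

end GamAux

section Candidate

variable {n : ℕ} [NeZero n]

/-- the candidate coalescence-time function for the wheel graph. -/
def tauW (n : ℕ) [NeZero n] : Option (Fin n) → Option (Fin n) → ℝ
  | none, none => 0
  | none, some _ => Tv n
  | some _, none => Tv n
  | some a, some b => Ff n ((b - a : Fin n) : ℕ)

lemma val_sub_one (hn : 3 ≤ n) {c : Fin n} (hc : c ≠ 0) :
    ((c - 1 : Fin n) : ℕ) = (c : ℕ) - 1 := by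
  have hc0 : (c : ℕ) ≠ 0 := fun h => hc (Fin.ext (by simp [h]))
  have hlt := c.isLt
  rw [Fin.sub_def, one_val hn]
  show (n - 1 + (c : ℕ)) % n = (c : ℕ) - 1
  rw [show n - 1 + (c : ℕ) = ((c : ℕ) - 1) + n by omega, Nat.add_mod_right]
  exact Nat.mod_eq_of_lt (by omega)

lemma val_add_one (hn : 3 ≤ n) (c : Fin n) :
    ((c + 1 : Fin n) : ℕ) = ((c : ℕ) + 1) % n := by
  rw [Fin.val_add, one_val hn]

lemma val_neg (hn : 3 ≤ n) {c : Fin n} (hc : c ≠ 0) :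
    ((-c : Fin n) : ℕ) = n - (c : ℕ) := by
  have hc0 : (c : ℕ) ≠ 0 := fun h => hc (Fin.ext (by simp [h]))
  have hlt := c.isLt
  rw [Fin.neg_def]
  show (n - (c : ℕ)) % n = n - (c : ℕ)
  exact Nat.mod_eq_of_lt (by omega)

lemma tauW_symm_leaf (hn : 3 ≤ n) (a b : Fin n) :
    Ff n ((b - a : Fin n) : ℕ) = Ff n ((a - b : Fin n) : ℕ) := by
  by_cases h : a = b
  · subst h; rfl
  · have hc : b - a ≠ 0 := sub_ne_zero.mpr (Ne.symm h)
    have h1 : a - b = -(b - a) := by abel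
    rw [h1, val_neg hn hc]
    exact Ff_symm (b - a).isLt.le

lemma sum_tauW_right (a : Fin n) :
    ∑ b : Fin n, Ff n ((b - a : Fin n) : ℕ) = ∑ j ∈ range n, Ff n j := by
  rw [← Fin.sum_univ_eq_sum_range (fun j => Ff n j) n]
  exact Fintype.sum_equiv (Equiv.subRight a) _ _ (fun b => rfl)

lemma sum_tauW_left (a : Fin n) :
    ∑ b : Fin n, Ff n ((a - b : Fin n) : ℕ) = ∑ j ∈ range n, Ff n j := by
  rw [← Fin.sum_univ_eq_sum_range (fun j => Ff n j) n]
  exact Fintype.sum_equiv (Equiv.subLeft a) _ _ (fun b => rfl)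

lemma tauW_isCoalescent (hn : 3 ≤ n) : IsCoalescent (wheelW n) (tauW n) := by
  refine ⟨?_, ?_, ?_⟩
  · rintro (_|a) (_|b)
    · rfl
    · rfl
    · rfl
    · show Ff n ((b - a : Fin n) : ℕ) = Ff n ((a - b : Fin n) : ℕ)
      exact tauW_symm_leaf hn a b
  · rintro (_|a)
    · rfl
    · show Ff n ((a - a : Fin n) : ℕ) = 0
      rw [sub_self, Fin.val_zero, Ff_zero]
  · rintro (_|a) (_|b) hij
    · exact absurd rfl hij
    · -- hub, leaf b
      rw [Finset.sum_add_distrib, hubStep hn (fun k => tauW n k (some b)),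
        leafStep hn b (fun k => tauW n none k)]
      show Tv n = 1 + 1/2 * (1/(n:ℝ) * (∑ c : Fin n, Ff n ((b - c : Fin n) : ℕ))
        + 1/3 * (0 + Tv n + Tv n))
      rw [sum_tauW_left b]
      linarith [TA n hn]
    · -- leaf a, hub
      rw [Finset.sum_add_distrib, leafStep hn a (fun k => tauW n k none),
        hubStep hn (fun k => tauW n (some a) k)]
      show Tv n = 1 + 1/2 * (1/3 * (0 + Tv n + Tv n)
        + 1/(n:ℝ) * (∑ c : Fin n, Ff n ((c - a : Fin n) : ℕ)))
      rw [sum_tauW_right a]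
      linarith [TA n hn]
    · -- leaf a, leaf b
      have hab : a ≠ b := fun h => hij (by rw [h])
      have hc : b - a ≠ 0 := sub_ne_zero.mpr (Ne.symm hab)
      have hc0 : ((b - a : Fin n) : ℕ) ≠ 0 := fun h => hc (Fin.ext (by simp [h]))
      have hlt := (b - a).isLt
      obtain ⟨k, hk⟩ : ∃ k, ((b - a : Fin n) : ℕ) = k + 1 :=
        ⟨((b - a : Fin n) : ℕ) - 1, by omega⟩
      obtain ⟨m, hnm⟩ : ∃ m, n = k + m + 2 := ⟨n - k - 2, by omega⟩
      rw [Finset.sum_add_distrib, leafStep hn a (fun k => tauW n k (some b)),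
        leafStep hn b (fun k => tauW n (some a) k)]
      show Ff n ((b - a : Fin n) : ℕ) = 1 + 1/2 *
        (1/3 * (Tv n + Ff n ((b - (a + 1) : Fin n) : ℕ) + Ff n ((b - (a - 1) : Fin n) : ℕ))
        + 1/3 * (Tv n + Ff n (((b + 1) - a : Fin n) : ℕ) + Ff n (((b - 1) - a : Fin n) : ℕ)))
      have g1 : b - (a + 1) = (b - a) - 1 := by abel
      have g2 : b - (a - 1) = (b - a) + 1 := by abel
      have g3 : (b + 1) - a = (b - a) + 1 := by abel
      have g4 : (b - 1) - a = (b - a) - 1 := by abel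
      rw [g1, g2, g3, g4, val_sub_one hn hc, hk]
      simp only [Nat.add_sub_cancel]
      have hadd : Ff n (((b - a) + 1 : Fin n) : ℕ) = Ff n (k + 2) := by
        rw [val_add_one hn, hk]
        by_cases h : k + 2 < n
        · rw [Nat.mod_eq_of_lt h]
        · have hkn : k + 2 = n := by omega
          rw [hkn, Nat.mod_self, Ff_zero, Ff_self]
      rw [hadd]
      have := Frec n k m hnm
      linarith
end Candidate

/-- the coalescence times of the wheel graph with `n ≥ 3` leaves
satisfy `τ_{ℓH} = B(1 + γⁿ) − 3` for every leaf `ℓ`, and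
`τ_{L,j} = B(1 − γʲ)(1 − γ^{n−j})` for leaves at cyclic distance `j`, `0 ≤ j ≤ n`. -/
theorem wheel_coalescence_times (n : ℕ) [NeZero n] (hn : 3 ≤ n)
    (τ : Option (Fin n) → Option (Fin n) → ℝ)
    (hτ : IsCoalescent (wheelW n) τ) :
    (∀ ℓ : Fin n, τ (some ℓ) none = wheelB n * (1 + gam ^ n) - 3) ∧
    (∀ (a : Fin n) (j : ℕ), j ≤ n →
      τ (some a) (some (a + Fin.ofNat n j)) =
        wheelB n * (1 - gam ^ j) * (1 - gam ^ (n - j))) := by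
  have hW := wheel_isWeighted hn
  have hC := tauW_isCoalescent (n := n) hn
  have heq : τ = tauW n := coalescent_unique hW hτ hC
  subst heq
  constructor
  · intro ℓ
    rfl
  · intro a j hj
    show Ff n (((a + Fin.ofNat n j) - a : Fin n) : ℕ) = _
    rw [add_sub_cancel_left, Fin.val_ofNat]
    rcases Nat.lt_or_ge j n with h | h
    · rw [Nat.mod_eq_of_lt h]
      rfl
    · have hjn : j = n := by omega
      subst hjn
      rw [Nat.mod_self, Ff_zero]
      simp


end EvoGraph
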